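/- arXiv:1202.5738 — 2 statements merged into one kernel-verified Lean document; each statement's English description precedes it below -/
import Mathlib

section
/- Let 0 < d, e be coprime positive integers, n = e + d, p = p_e the e-th parabolic subalgebra of sl_n(ℂ) (block upper-triangular traceless matrices with diagonal blocks of sizes e and d), and J = J_{(e,d)} the 0-1 matrix defined by the recursion: J_{(1,1)} = [[0,1],[0,0]], and for (p,q) with ε(p,q) = (a,b) (where ε(a,b) = (a-b,b) if a>b, (a,b-a) if a<b), J_{(p,q)} is obtained by the block constructions (E:formcanonique). Then the pairing ω_J : p × p → ℂ, ω_J(a,b) = tr(Jᵗ[a,b]), is non-degenerate, i.e. p is a Frobenius Lie algebra with Frobenius functional a ↦ tr(Jᵗa). -/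
open Matrix

/-- The entries of the canonical 0-1 matrix `J_{(e,d)}` defined by the recursion
`J_{(1,1)} = [[0,1],[0,0]]` together with the block extension rules. -/
noncomputable def Jfun : ℕ → ℕ → ℕ → ℕ → ℂ
  | e, d, i, j =>
    if e = 1 ∧ d = 1 then (if i = 0 ∧ j = 1 then 1 else 0)
    else if h1 : 0 < e ∧ e < d then
      -- `J_{(e,d)} = [[0, 1, 0], [0, A₁, A₂], [0, 0, A₃]]` where `J_{(e,d-e)} = [[A₁,A₂],[0,A₃]]`
      (if i < e then (if j = i + e then 1 else 0)
       else if e ≤ j then Jfun e (d - e) (i - e) (j - e) else 0)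
    else if h2 : 0 < d ∧ d < e then
      -- `J_{(e,d)} = [[A₁, A₂, 0], [0, A₃, 1], [0, 0, 0]]` where `J_{(e-d,d)} = [[A₁,A₂],[0,A₃]]`
      (if i < e ∧ j < e then Jfun (e - d) d i j
       else if e - d ≤ i ∧ i < e ∧ j = i + d then 1 else 0)
    else 0
  termination_by e d _ _ => e + d
  decreasing_by all_goals omega

lemma Jfun_base (i j : ℕ) : Jfun 1 1 i j = if i = 0 ∧ j = 1 then 1 else 0 := by
  rw [Jfun.eq_def]; simp

lemma Jfun_lt {e d : ℕ} (he : 0 < e) (hed : e < d) (i j : ℕ) :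
    Jfun e d i j = if i < e then (if j = i + e then 1 else 0)
      else if e ≤ j then Jfun e (d - e) (i - e) (j - e) else 0 := by
  rw [Jfun.eq_def]
  have h1 : ¬(e = 1 ∧ d = 1) := by omega
  simp only [h1, if_false, dif_pos (show 0 < e ∧ e < d from ⟨he, hed⟩)]

lemma Jfun_gt {e d : ℕ} (hd : 0 < d) (hde : d < e) (i j : ℕ) :
    Jfun e d i j = if i < e ∧ j < e then Jfun (e - d) d i j
      else if e - d ≤ i ∧ i < e ∧ j = i + d then 1 else 0 := by
  rw [Jfun.eq_def]
  have h1 : ¬(e = 1 ∧ d = 1) := by omega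
  have h2 : ¬(0 < e ∧ e < d) := by omega
  simp only [h1, h2, if_false, dif_neg, not_false_iff, dif_pos (show 0 < d ∧ d < e from ⟨hd, hde⟩)]

/-- Entrywise commutator pairing `(Jᵀ a - a Jᵀ) i j`. -/
noncomputable def Mfun (e d : ℕ) (a : ℕ → ℕ → ℂ) (i j : ℕ) : ℂ :=
  (∑ k ∈ Finset.range (e + d), Jfun e d k i * a k j)
    - ∑ k ∈ Finset.range (e + d), a i k * Jfun e d j k

lemma sum_delta (m t : ℕ) (g : ℕ → ℂ) (ht : t < m) (h0 : ∀ k, k < m → k ≠ t → g k = 0) :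
    ∑ k ∈ Finset.range m, g k = g t := by
  rw [Finset.sum_eq_single_of_mem t (Finset.mem_range.2 ht)]
  intro k hk hne; exact h0 k (Finset.mem_range.1 hk) hne

lemma Mfun_lt {e d : ℕ} (he : 0 < e) (hed : e < d) (a : ℕ → ℕ → ℂ) (i j : ℕ) :
    Mfun e d a i j =
      ((if e ≤ i ∧ i < e + e then a (i - e) j else 0)
        + (if e ≤ i then ∑ k ∈ Finset.range d, Jfun e (d - e) k (i - e) * a (e + k) j else 0))
      - ((if j < e then a i (e + j) else 0)
        + (if e ≤ j then ∑ k ∈ Finset.range d, a i (e + k) * Jfun e (d - e) (j - e) k else 0)) := by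
  have h1a : ∑ k ∈ Finset.range e, Jfun e d k i * a k j
      = if e ≤ i ∧ i < e + e then a (i - e) j else 0 := by
    by_cases h : e ≤ i ∧ i < e + e
    · rw [if_pos h, sum_delta e (i - e) _ (by omega)]
      · rw [Jfun_lt he hed, if_pos (by omega), if_pos (by omega), one_mul]
      · intro k hk hne
        rw [Jfun_lt he hed, if_pos hk, if_neg (by omega), zero_mul]
    · rw [if_neg h, Finset.sum_eq_zero]
      intro k hk
      rw [Jfun_lt he hed, if_pos (Finset.mem_range.1 hk),
        if_neg (by have := Finset.mem_range.1 hk; omega), zero_mul]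
  have h1b : ∑ k ∈ Finset.range d, Jfun e d (e + k) i * a (e + k) j
      = if e ≤ i then ∑ k ∈ Finset.range d, Jfun e (d - e) k (i - e) * a (e + k) j else 0 := by
    by_cases hie : e ≤ i
    · rw [if_pos hie]
      refine Finset.sum_congr rfl fun k _ => ?_
      rw [Jfun_lt he hed, if_neg (by omega), if_pos hie, Nat.add_sub_cancel_left]
    · rw [if_neg hie, Finset.sum_eq_zero]
      intro k _
      rw [Jfun_lt he hed, if_neg (by omega), if_neg hie, zero_mul]
  have h2a : ∑ k ∈ Finset.range e, a i k * Jfun e d j k = 0 := by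
    refine Finset.sum_eq_zero fun k hk => ?_
    have hk' := Finset.mem_range.1 hk
    rw [Jfun_lt he hed]
    by_cases hje : j < e
    · rw [if_pos hje, if_neg (by omega), mul_zero]
    · rw [if_neg hje, if_neg (by omega), mul_zero]
  have h2b : ∑ k ∈ Finset.range d, a i (e + k) * Jfun e d j (e + k)
      = (if j < e then a i (e + j) else 0)
        + (if e ≤ j then ∑ k ∈ Finset.range d, a i (e + k) * Jfun e (d - e) (j - e) k else 0) := by
    by_cases hje : j < e
    · rw [if_pos hje, if_neg (by omega), add_zero, sum_delta d j _ (by omega)]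
      · rw [Jfun_lt he hed, if_pos hje, if_pos (by omega), mul_one]
      · intro k _ hne
        rw [Jfun_lt he hed, if_pos hje, if_neg (by omega), mul_zero]
    · rw [if_neg hje, if_pos (by omega), zero_add]
      refine Finset.sum_congr rfl fun k _ => ?_
      rw [Jfun_lt he hed, if_neg hje, if_pos (by omega), Nat.add_sub_cancel_left]
  unfold Mfun
  rw [Finset.sum_range_add, Finset.sum_range_add, h1a, h1b, h2a, h2b, zero_add]

lemma Mfun_gt {e d : ℕ} (hd : 0 < d) (hde : d < e) (a : ℕ → ℕ → ℂ) (i j : ℕ)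
    (hi : i < e + d) (hj : j < e + d) :
    Mfun e d a i j =
      (if i < e then ∑ k ∈ Finset.range e, Jfun (e - d) d k i * a k j else a (i - d) j)
      - (if j < e then (∑ k ∈ Finset.range e, a i k * Jfun (e - d) d j k)
          + (if e - d ≤ j then a i (j + d) else 0) else 0) := by
  have g1a : ∑ k ∈ Finset.range e, Jfun e d k i * a k j
      = if i < e then ∑ k ∈ Finset.range e, Jfun (e - d) d k i * a k j else a (i - d) j := by
    by_cases hie : i < e
    · rw [if_pos hie]
      refine Finset.sum_congr rfl fun k hk => ?_
      rw [Jfun_gt hd hde, if_pos ⟨Finset.mem_range.1 hk, hie⟩]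
    · rw [if_neg hie, sum_delta e (i - d) _ (by omega)]
      · rw [Jfun_gt hd hde, if_neg (by omega), if_pos (by omega), one_mul]
      · intro k hk hne
        rw [Jfun_gt hd hde, if_neg (by omega), if_neg (by omega), zero_mul]
  have g1b : ∑ k ∈ Finset.range d, Jfun e d (e + k) i * a (e + k) j = 0 := by
    refine Finset.sum_eq_zero fun k _ => ?_
    rw [Jfun_gt hd hde, if_neg (by omega), if_neg (by omega), zero_mul]
  have g2a : ∑ k ∈ Finset.range e, a i k * Jfun e d j k
      = if j < e then ∑ k ∈ Finset.range e, a i k * Jfun (e - d) d j k else 0 := by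
    by_cases hje : j < e
    · rw [if_pos hje]
      refine Finset.sum_congr rfl fun k hk => ?_
      rw [Jfun_gt hd hde, if_pos ⟨hje, Finset.mem_range.1 hk⟩]
    · rw [if_neg hje, Finset.sum_eq_zero]
      intro k hk
      rw [Jfun_gt hd hde, if_neg (by omega),
        if_neg (by have := Finset.mem_range.1 hk; omega), mul_zero]
  have g2b : ∑ k ∈ Finset.range d, a i (e + k) * Jfun e d j (e + k)
      = if j < e then (if e - d ≤ j then a i (j + d) else 0) else 0 := by
    by_cases hje : j < e
    · by_cases hcj : e - d ≤ j
      · rw [if_pos hje, if_pos hcj, sum_delta d (j + d - e) _ (by omega)]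
        · rw [Jfun_gt hd hde, if_neg (by omega), if_pos ⟨hcj, hje, by omega⟩, mul_one]
          congr 1; omega
        · intro k _ hne
          rw [Jfun_gt hd hde, if_neg (by omega), if_neg (by omega), mul_zero]
      · rw [if_pos hje, if_neg hcj, Finset.sum_eq_zero]
        intro k _
        rw [Jfun_gt hd hde, if_neg (by omega), if_neg (by omega), mul_zero]
    · rw [if_neg hje, Finset.sum_eq_zero]
      intro k _
      rw [Jfun_gt hd hde, if_neg (by omega), if_neg (by omega), mul_zero]
  unfold Mfun
  rw [Finset.sum_range_add, Finset.sum_range_add, g1a, g1b, g2a, g2b, add_zero]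
  by_cases hje : j < e <;> simp [hje]

noncomputable def restr (m s : ℕ) (a : ℕ → ℕ → ℂ) : ℕ → ℕ → ℂ :=
  fun k l => if k < m ∧ l < m then a (s + k) (s + l) else 0

lemma key : ∀ N e d : ℕ, e + d ≤ N → 0 < e → 0 < d → Nat.Coprime e d →
    ∀ a : ℕ → ℕ → ℂ,
    (∀ i j, e ≤ i → j < e → a i j = 0) →
    (∀ i j, i < e + d → j < e + d → (e ≤ i ∨ j < e) → Mfun e d a i j = 0) →
    ∀ i j, i < e + d → j < e + d → a i j = if i = j then a 0 0 else 0 := by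
  intro N
  induction N with
  | zero => intro e d h he hd; omega
  | succ N IH =>
    intro e d hN he hd hcop a hLL hM
    rcases lt_trichotomy e d with hed | heq | hde
    · -- e < d
      have hB : ∀ i j, i < e → j < e → a i (e + j) = 0 := by
        intro i j hi hj
        have h0 := hM i j (by omega) (by omega) (Or.inr hj)
        rw [Mfun_lt he hed] at h0
        rw [if_neg (by omega), if_neg (by omega), if_pos hj, if_neg (by omega)] at h0
        linear_combination -h0
      have hF : ∀ s t, e ≤ s → s < d → t < e → a (e + s) (e + t) = 0 := by
        intro s t hs hsd ht
        have h0 := hM (e + s) t (by omega) (by omega) (Or.inl (by omega))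
        rw [Mfun_lt he hed] at h0
        rw [if_neg (by omega), if_pos (by omega), if_pos ht, if_neg (by omega)] at h0
        rw [Finset.sum_eq_zero (fun k _ => by rw [hLL (e + k) t (by omega) ht, mul_zero])] at h0
        linear_combination -h0
      have hAD : ∀ s t, s < e → t < e → a s t = a (e + s) (e + t) := by
        intro s t hs ht
        have h0 := hM (e + s) t (by omega) (by omega) (Or.inl (by omega))
        rw [Mfun_lt he hed] at h0
        rw [if_pos (by omega), if_pos (by omega), if_pos ht, if_neg (by omega)] at h0
        rw [Finset.sum_eq_zero (fun k _ => by rw [hLL (e + k) t (by omega) ht, mul_zero])] at h0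
        rw [Nat.add_sub_cancel_left] at h0
        linear_combination h0
      have hd' : 0 < d - e := by omega
      have hcop' : Nat.Coprime e (d - e) :=
        (((Nat.coprime_sub_self_left (le_of_lt hed)).2 hcop.symm).symm)
      have hLL' : ∀ i j, e ≤ i → j < e → restr d e a i j = 0 := by
        intro i j h1 h2
        simp only [restr]
        split_ifs with h
        · exact hF i j h1 h.1 h2
        · rfl
      have hM' : ∀ i j, i < e + (d - e) → j < e + (d - e) → (e ≤ i ∨ j < e) →
          Mfun e (d - e) (restr d e a) i j = 0 := by
        intro s t hs ht hst
        have hsd : s < d := by omega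
        have htd : t < d := by omega
        have h0 := hM (e + s) (e + t) (by omega) (by omega) (Or.inl (by omega))
        rw [Mfun_lt he hed] at h0
        rw [if_pos (show e ≤ e + s by omega), if_neg (show ¬ e + t < e by omega),
          if_pos (show e ≤ e + t by omega), Nat.add_sub_cancel_left,
          Nat.add_sub_cancel_left] at h0
        have hQ : Mfun e (d - e) (restr d e a) s t
            = (∑ k ∈ Finset.range d, Jfun e (d - e) k s * a (e + k) (e + t))
              - ∑ k ∈ Finset.range d, a (e + s) (e + k) * Jfun e (d - e) t k := by
          unfold Mfun
          rw [show e + (d - e) = d by omega]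
          congr 1
          · refine Finset.sum_congr rfl fun k hk => ?_
            simp only [restr]
            rw [if_pos ⟨Finset.mem_range.1 hk, htd⟩]
          · refine Finset.sum_congr rfl fun k hk => ?_
            simp only [restr]
            rw [if_pos ⟨hsd, Finset.mem_range.1 hk⟩]
        rw [hQ]
        by_cases hse : s < e
        · have hte : t < e := by
            rcases hst with h | h
            · omega
            · exact h
          rw [if_pos (by omega), hB s t hse hte] at h0
          linear_combination h0
        · rw [if_neg (by omega)] at h0
          linear_combination h0
      have hIH := IH e (d - e) (by omega) he hd' hcop' (restr d e a) hLL' hM'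
      have hIH2 : ∀ s t, s < d → t < d → a (e + s) (e + t) = if s = t then a 0 0 else 0 := by
        intro s t hs ht
        have h := hIH s t (by omega) (by omega)
        simp only [restr] at h
        rw [if_pos ⟨hs, ht⟩, if_pos (show 0 < d ∧ 0 < d from ⟨hd, hd⟩)] at h
        rw [h, (hAD 0 0 he he).symm]
      intro i j hi hj
      by_cases hie : i < e
      · by_cases hje : j < e
        · rw [hAD i j hie hje, hIH2 i j (by omega) (by omega)]
        · rw [if_neg (by omega)]
          have h0 := hM (e + i) j (by omega) hj (Or.inl (by omega))
          rw [Mfun_lt he hed] at h0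
          rw [if_pos (by omega), if_pos (by omega), if_neg (by omega), if_pos (by omega),
            Nat.add_sub_cancel_left] at h0
          have hS1 : ∑ k ∈ Finset.range d, Jfun e (d - e) k i * a (e + k) j
              = Jfun e (d - e) (j - e) i * a 0 0 := by
            have hcg : ∀ k ∈ Finset.range d, Jfun e (d - e) k i * a (e + k) j
                = if k = j - e then Jfun e (d - e) k i * a 0 0 else 0 := by
              intro k hk
              have h := hIH2 k (j - e) (Finset.mem_range.1 hk) (by omega)
              rw [show e + (j - e) = j by omega] at h
              rw [h]
              by_cases hkj : k = j - e
              · rw [if_pos hkj, if_pos hkj]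
              · rw [if_neg hkj, if_neg hkj, mul_zero]
            rw [Finset.sum_congr rfl hcg, Finset.sum_ite_eq' (Finset.range d) (j - e)
              (fun k => Jfun e (d - e) k i * a 0 0), if_pos (Finset.mem_range.2 (by omega))]
          have hS2 : ∑ k ∈ Finset.range d, a (e + i) (e + k) * Jfun e (d - e) (j - e) k
              = a 0 0 * Jfun e (d - e) (j - e) i := by
            have hcg : ∀ k ∈ Finset.range d, a (e + i) (e + k) * Jfun e (d - e) (j - e) k
                = if i = k then a 0 0 * Jfun e (d - e) (j - e) k else 0 := by
              intro k hk
              rw [hIH2 i k (by omega) (Finset.mem_range.1 hk)]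
              by_cases hik : i = k
              · rw [if_pos hik, if_pos hik]
              · rw [if_neg hik, if_neg hik, zero_mul]
            rw [Finset.sum_congr rfl hcg, Finset.sum_ite_eq (Finset.range d) i
              (fun k => a 0 0 * Jfun e (d - e) (j - e) k), if_pos (Finset.mem_range.2 (by omega))]
          rw [hS1, hS2] at h0
          linear_combination h0
      · by_cases hje : j < e
        · rw [hLL i j (by omega) hje, if_neg (by omega)]
        · have h := hIH2 (i - e) (j - e) (by omega) (by omega)
          rw [show e + (i - e) = i by omega, show e + (j - e) = j by omega] at h
          rw [h]
          by_cases hij : i = j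
          · rw [if_pos (by omega), if_pos hij]
          · rw [if_neg (by omega), if_neg hij]
    · -- e = d : coprimality forces e = d = 1
      subst heq
      have he1 : e = 1 := by
        have h := hcop
        unfold Nat.Coprime at h
        rwa [Nat.gcd_self] at h
      subst he1
      intro i j hi hj
      have h00 := hM 0 0 (by omega) (by omega) (Or.inr (by omega))
      have h10 := hM 1 0 (by omega) (by omega) (Or.inr (by omega))
      have h11 := hM 1 1 (by omega) (by omega) (Or.inl (by omega))
      have hc : a 1 0 = 0 := hLL 1 0 (by omega) (by omega)
      unfold Mfun at h00 h10 h11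
      simp only [Finset.sum_range_succ, Finset.sum_range_zero, Jfun_base] at h00 h10 h11
      norm_num at h00 h10 h11
      have h10' : a 1 1 = a 0 0 := by linear_combination -h10
      interval_cases i <;> interval_cases j <;> simp_all
    · -- d < e
      have hcpos : 0 < e - d := by omega
      have hF : ∀ s t, e - d ≤ s → s < e → e ≤ t → t < e + d → a s t = 0 := by
        intro s t hs1 hs2 ht1 ht2
        have h0 := hM (s + d) t (by omega) (by omega) (Or.inl (by omega))
        rw [Mfun_gt hd hde a (s + d) t (by omega) (by omega)] at h0
        rw [if_neg (show ¬ s + d < e by omega), if_neg (show ¬ t < e by omega),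
          Nat.add_sub_cancel] at h0
        linear_combination h0
      have hDEG : ∀ s j, e - d ≤ s → s < e → j < e →
          a s j = if e - d ≤ j then a (s + d) (j + d) else 0 := by
        intro s j hs1 hs2 hj
        have h0 := hM (s + d) j (by omega) (by omega) (Or.inr hj)
        rw [Mfun_gt hd hde a (s + d) j (by omega) (by omega)] at h0
        rw [if_neg (show ¬ s + d < e by omega), if_pos hj, Nat.add_sub_cancel] at h0
        rw [Finset.sum_eq_zero (fun k hk => by
          rw [hLL (s + d) k (by omega) (Finset.mem_range.1 hk), zero_mul])] at h0
        by_cases hcj : e - d ≤ j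
        · rw [if_pos hcj] at h0 ⊢; linear_combination h0
        · rw [if_neg hcj] at h0 ⊢; linear_combination h0
      have hcop' : Nat.Coprime (e - d) d := (Nat.coprime_sub_self_left (le_of_lt hde)).2 hcop
      have hLL' : ∀ i j, e - d ≤ i → j < e - d → restr e 0 a i j = 0 := by
        intro i j h1 h2
        simp only [restr]
        split_ifs with h
        · have hx := hDEG i j h1 h.1 (by omega)
          rw [if_neg (by omega)] at hx
          simpa using hx
        · rfl
      have hM' : ∀ i j, i < (e - d) + d → j < (e - d) + d → (e - d ≤ i ∨ j < e - d) →
          Mfun (e - d) d (restr e 0 a) i j = 0 := by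
        intro i j hi' hj' hcond
        have hie : i < e := by omega
        have hje : j < e := by omega
        have h0 := hM i j (by omega) (by omega) (Or.inr (by omega))
        rw [Mfun_gt hd hde a i j (by omega) (by omega)] at h0
        rw [if_pos hie, if_pos hje] at h0
        have hQ : Mfun (e - d) d (restr e 0 a) i j
            = (∑ k ∈ Finset.range e, Jfun (e - d) d k i * a k j)
              - ∑ k ∈ Finset.range e, a i k * Jfun (e - d) d j k := by
          unfold Mfun
          rw [show (e - d) + d = e by omega]
          congr 1
          · refine Finset.sum_congr rfl fun k hk => ?_
            simp only [restr]
            rw [if_pos ⟨Finset.mem_range.1 hk, hje⟩, Nat.zero_add, Nat.zero_add]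
          · refine Finset.sum_congr rfl fun k hk => ?_
            simp only [restr]
            rw [if_pos ⟨hie, Finset.mem_range.1 hk⟩, Nat.zero_add, Nat.zero_add]
        rw [hQ]
        by_cases hcj : e - d ≤ j
        · have hci : e - d ≤ i := by
            rcases hcond with h | h
            · exact h
            · omega
          rw [if_pos hcj, hF i (j + d) hci hie (by omega) (by omega)] at h0
          linear_combination h0
        · rw [if_neg hcj] at h0
          linear_combination h0
      have hIH := IH (e - d) d (by omega) hcpos hd hcop' (restr e 0 a) hLL' hM'
      have hIH2 : ∀ i j, i < e → j < e → a i j = if i = j then a 0 0 else 0 := by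
        intro i j hi hj
        have h := hIH i j (by omega) (by omega)
        simp only [restr] at h
        rw [if_pos ⟨hi, hj⟩, if_pos (show 0 < e ∧ 0 < e from ⟨he, he⟩)] at h
        simpa using h
      intro i j hi hj
      by_cases hie : i < e
      · by_cases hje : j < e
        · exact hIH2 i j hie hje
        · rw [if_neg (by omega)]
          have h0 := hM i (j - d) (by omega) (by omega) (Or.inr (by omega))
          rw [Mfun_gt hd hde a i (j - d) (by omega) (by omega)] at h0
          rw [if_pos hie, if_pos (show j - d < e by omega),
            if_pos (show e - d ≤ j - d by omega), show j - d + d = j by omega] at h0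
          have hS1 : ∑ k ∈ Finset.range e, Jfun (e - d) d k i * a k (j - d)
              = Jfun (e - d) d (j - d) i * a 0 0 := by
            have hcg : ∀ k ∈ Finset.range e, Jfun (e - d) d k i * a k (j - d)
                = if k = j - d then Jfun (e - d) d k i * a 0 0 else 0 := by
              intro k hk
              rw [hIH2 k (j - d) (Finset.mem_range.1 hk) (by omega)]
              by_cases hkj : k = j - d
              · rw [if_pos hkj, if_pos hkj]
              · rw [if_neg hkj, if_neg hkj, mul_zero]
            rw [Finset.sum_congr rfl hcg, Finset.sum_ite_eq' (Finset.range e) (j - d)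
              (fun k => Jfun (e - d) d k i * a 0 0), if_pos (Finset.mem_range.2 (by omega))]
          have hS2 : ∑ k ∈ Finset.range e, a i k * Jfun (e - d) d (j - d) k
              = a 0 0 * Jfun (e - d) d (j - d) i := by
            have hcg : ∀ k ∈ Finset.range e, a i k * Jfun (e - d) d (j - d) k
                = if i = k then a 0 0 * Jfun (e - d) d (j - d) k else 0 := by
              intro k hk
              rw [hIH2 i k hie (Finset.mem_range.1 hk)]
              by_cases hik : i = k
              · rw [if_pos hik, if_pos hik]
              · rw [if_neg hik, if_neg hik, zero_mul]
            rw [Finset.sum_congr rfl hcg, Finset.sum_ite_eq (Finset.range e) i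
              (fun k => a 0 0 * Jfun (e - d) d (j - d) k), if_pos (Finset.mem_range.2 hie)]
          rw [hS1, hS2] at h0
          linear_combination -h0
      · by_cases hje : j < e
        · rw [hLL i j (by omega) hje, if_neg (by omega)]
        · have h1 := hDEG (i - d) (j - d) (by omega) (by omega) (by omega)
          rw [if_pos (by omega), show i - d + d = i by omega, show j - d + d = j by omega] at h1
          rw [← h1, hIH2 (i - d) (j - d) (by omega) (by omega)]
          by_cases hij : i = j
          · rw [if_pos (by omega), if_pos hij]
          · rw [if_neg (by omega), if_neg hij]

theorem stmt_9 (e d : ℕ) (he : 0 < e) (hd : 0 < d) (hcop : Nat.Coprime e d)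
    (J : Matrix (Fin (e + d)) (Fin (e + d)) ℂ)
    (hJ : J = Matrix.of fun i j : Fin (e + d) => Jfun e d (i : ℕ) (j : ℕ))
    (a : Matrix (Fin (e + d)) (Fin (e + d)) ℂ)
    (ha0 : a.trace = 0)
    (ha1 : ∀ i j : Fin (e + d), e ≤ (i : ℕ) → (j : ℕ) < e → a i j = 0)
    (hortho : ∀ b : Matrix (Fin (e + d)) (Fin (e + d)) ℂ, b.trace = 0 →
      (∀ i j : Fin (e + d), e ≤ (i : ℕ) → (j : ℕ) < e → b i j = 0) →
      (Jᵀ * (a * b - b * a)).trace = 0) :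
    a = 0 := by
  set M : Matrix (Fin (e + d)) (Fin (e + d)) ℂ := Jᵀ * a - a * Jᵀ with hMdef
  have htr : ∀ b : Matrix (Fin (e + d)) (Fin (e + d)) ℂ, b.trace = 0 →
      (∀ i j : Fin (e + d), e ≤ (i : ℕ) → (j : ℕ) < e → b i j = 0) →
      (M * b).trace = 0 := by
    intro b h1 h2
    have h := hortho b h1 h2
    have e1 : (M * b) = Jᵀ * (a * b) - a * (Jᵀ * b) := by
      rw [hMdef, Matrix.sub_mul, Matrix.mul_assoc, Matrix.mul_assoc]
    have e2 : (a * (Jᵀ * b)).trace = (Jᵀ * (b * a)).trace := by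
      rw [Matrix.trace_mul_comm, Matrix.mul_assoc]
    rw [e1, Matrix.trace_sub, e2, ← Matrix.trace_sub, ← Matrix.mul_sub]
    exact h
  have hsingle : ∀ u v : Fin (e + d),
      (M * Matrix.single v u (1 : ℂ)).trace = M u v := by
    intro u v
    rw [Matrix.trace]
    rw [Finset.sum_eq_single u (fun x _ hx => by
        rw [Matrix.diag_apply, Matrix.mul_single_apply_of_ne (hbj := hx)])
      (fun hu => absurd (Finset.mem_univ u) hu)]
    rw [Matrix.diag_apply, Matrix.mul_single_apply_same, mul_one]
  have hoff : ∀ u v : Fin (e + d), u ≠ v → ¬((e : ℕ) ≤ (v : ℕ) ∧ (u : ℕ) < e) →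
      M u v = 0 := by
    intro u v huv hcond
    have hb2 : ∀ i j : Fin (e + d), e ≤ (i : ℕ) → (j : ℕ) < e →
        Matrix.single v u (1 : ℂ) i j = 0 := by
      intro i j h1 h2
      apply Matrix.single_apply_of_ne
      rintro ⟨rfl, rfl⟩
      exact hcond ⟨h1, h2⟩
    have hb1 : (Matrix.single v u (1 : ℂ)).trace = 0 :=
      Matrix.trace_single_eq_of_ne v u 1 huv.symm
    have h := htr _ hb1 hb2
    rwa [hsingle u v] at h
  have hdiageq : ∀ u v : Fin (e + d), M u u = M v v := by
    intro u v
    by_cases huv : u = v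
    · rw [huv]
    · have hb1 : (Matrix.single u u (1 : ℂ)
          - Matrix.single v v (1 : ℂ)).trace = 0 := by
        rw [Matrix.trace_sub, Matrix.trace_single_eq_same,
          Matrix.trace_single_eq_same, sub_self]
      have hb2 : ∀ i j : Fin (e + d), e ≤ (i : ℕ) → (j : ℕ) < e →
          (Matrix.single u u (1 : ℂ) - Matrix.single v v (1 : ℂ)) i j = 0 := by
        intro i j h1 h2
        have hij : i ≠ j := by
          intro h
          rw [h] at h1
          omega
        rw [Matrix.sub_apply,
          Matrix.single_apply_of_ne (h := fun h => hij (h.1.symm.trans h.2)),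
          Matrix.single_apply_of_ne (h := fun h => hij (h.1.symm.trans h.2)),
          sub_zero]
      have h := htr _ hb1 hb2
      rw [Matrix.mul_sub, Matrix.trace_sub, hsingle u u, hsingle v v] at h
      exact sub_eq_zero.1 h
  have htr0 : M.trace = 0 := by
    rw [hMdef, Matrix.trace_sub, Matrix.trace_mul_comm]
    exact sub_self _
  have hdiag0 : ∀ u : Fin (e + d), M u u = 0 := by
    intro u
    have hsum : (0 : ℂ) = ((e + d : ℕ) : ℂ) * M u u := by
      rw [← htr0, Matrix.trace]
      rw [Finset.sum_congr rfl (fun v _ => (show M.diag v = M u u from hdiageq v u))]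
      rw [Finset.sum_const, Finset.card_univ, Fintype.card_fin, nsmul_eq_mul]
    have hne : ((e + d : ℕ) : ℂ) ≠ 0 := Nat.cast_ne_zero.2 (by omega)
    exact ((mul_eq_zero.1 hsum.symm).resolve_left hne)
  have hMz : ∀ u v : Fin (e + d), ((e : ℕ) ≤ (u : ℕ) ∨ (v : ℕ) < e) → M u v = 0 := by
    intro u v hc
    by_cases huv : u = v
    · rw [huv]; exact hdiag0 v
    · refine hoff u v huv ?_
      rintro ⟨h1, h2⟩
      rcases hc with h | h
      · omega
      · omega
  set A : ℕ → ℕ → ℂ :=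
    fun i j => if h : i < e + d ∧ j < e + d then a ⟨i, h.1⟩ ⟨j, h.2⟩ else 0 with hA
  have hbr : ∀ u v : Fin (e + d), Mfun e d A (u : ℕ) (v : ℕ) = M u v := by
    intro u v
    rw [hMdef, Matrix.sub_apply, Matrix.mul_apply, Matrix.mul_apply]
    unfold Mfun
    congr 1
    · rw [← Fin.sum_univ_eq_sum_range (fun k => Jfun e d k (u : ℕ) * A k (v : ℕ)) (e + d)]
      refine Finset.sum_congr rfl fun k _ => ?_
      rw [Matrix.transpose_apply, hJ, Matrix.of_apply]
      congr 1
      simp only [hA]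
      rw [dif_pos ⟨k.isLt, v.isLt⟩]
    · rw [← Fin.sum_univ_eq_sum_range (fun k => A (u : ℕ) k * Jfun e d (v : ℕ) k) (e + d)]
      refine Finset.sum_congr rfl fun k _ => ?_
      rw [Matrix.transpose_apply, hJ, Matrix.of_apply]
      congr 1
      simp only [hA]
      rw [dif_pos ⟨u.isLt, k.isLt⟩]
  have hALL : ∀ i j, e ≤ i → j < e → A i j = 0 := by
    intro i j h1 h2
    simp only [hA]
    split
    · next hh => exact ha1 ⟨i, hh.1⟩ ⟨j, hh.2⟩ h1 h2
    · rfl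
  have hAM : ∀ i j, i < e + d → j < e + d → (e ≤ i ∨ j < e) → Mfun e d A i j = 0 := by
    intro i j hi hj hcond
    exact (hbr ⟨i, hi⟩ ⟨j, hj⟩).trans (hMz ⟨i, hi⟩ ⟨j, hj⟩ hcond)
  have hfin := key (e + d) e d le_rfl he hd hcop A hALL hAM
  have hAa : ∀ u v : Fin (e + d), A (u : ℕ) (v : ℕ) = a u v := by
    intro u v
    simp only [hA]
    rw [dif_pos ⟨u.isLt, v.isLt⟩]
  have ha00 : A 0 0 = 0 := by
    have hconst : ∀ u : Fin (e + d), a.diag u = A 0 0 := by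
      intro u
      have h := hfin (u : ℕ) (u : ℕ) u.isLt u.isLt
      rw [if_pos rfl] at h
      rw [show a.diag u = a u u from rfl, ← hAa u u, h]
    have hsum : (0 : ℂ) = ((e + d : ℕ) : ℂ) * A 0 0 := by
      rw [← ha0, Matrix.trace, Finset.sum_congr rfl (fun u _ => hconst u),
        Finset.sum_const, Finset.card_univ, Fintype.card_fin, nsmul_eq_mul]
    have hne : ((e + d : ℕ) : ℂ) ≠ 0 := Nat.cast_ne_zero.2 (by omega)
    exact ((mul_eq_zero.1 hsum.symm).resolve_left hne)
  ext u v
  rw [Matrix.zero_apply, ← hAa u v, hfin (u : ℕ) (v : ℕ) u.isLt v.isLt]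
  by_cases huv : (u : ℕ) = (v : ℕ)
  · rw [if_pos huv, ha00]
  · rw [if_neg huv]
end

section
/- Let f be a finite-dimensional Lie algebra over a field k, l ⊂ f a Lie subalgebra, n ⊂ f an abelian Lie ideal with f = l ⊕ n (direct sum of vector spaces). Fix n̂ ∈ n* such that for any n̂' ∈ n* there exists l ∈ l with n̂'(m) = n̂([m,l]) for all m ∈ n. Let s = {l ∈ l : n̂([x,l]) = 0 for all x ∈ f}. If ŝ ∈ l* restricts to a Frobenius functional on s (i.e. (a,b) ↦ ŝ([a,b]) is non-degenerate on s × s), then ŝ + n̂ (extended by zero to f) is a Frobenius functional on f. -/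
theorem stmt_10 (k L : Type*) [Field k] [LieRing L] [LieAlgebra k L] [Module.Finite k L]
    (l : LieSubalgebra k L) (n : LieIdeal k L)
    (habel : ∀ x ∈ n, ∀ y ∈ n, ⁅x, y⁆ = (0 : L))
    (hdisj : l.toSubmodule ⊓ LieSubmodule.toSubmodule n = ⊥)
    (hsup : l.toSubmodule ⊔ LieSubmodule.toSubmodule n = ⊤)
    (φn : L →ₗ[k] k) (hφn : ∀ x ∈ l, φn x = 0)
    (hreg : ∀ φ : L →ₗ[k] k, (∀ x ∈ l, φ x = 0) →
      ∃ a ∈ l, ∀ m ∈ n, φ m = φn ⁅m, a⁆)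
    (φs : L →ₗ[k] k) (hφs : ∀ x ∈ n, φs x = 0)
    (hfrobS : ∀ a ∈ l, (∀ x : L, φn ⁅x, a⁆ = 0) →
      (∀ b ∈ l, (∀ x : L, φn ⁅x, b⁆ = 0) → φs ⁅a, b⁆ = 0) → a = 0) :
    ∀ x : L, (∀ y : L, (φs + φn) ⁅x, y⁆ = 0) → x = 0 := by
  intro x hx
  have hxmem : x ∈ l.toSubmodule ⊔ LieSubmodule.toSubmodule n := by
    rw [hsup]; exact Submodule.mem_top
  obtain ⟨a, ha, m, hm, hxeq⟩ := Submodule.mem_sup.mp hxmem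
  have ha' : a ∈ l := ha
  have hm' : m ∈ n := hm
  -- Step 1: φn ⁅a, m'⁆ = 0 for m' ∈ n
  have h1 : ∀ m' ∈ n, φn ⁅a, m'⁆ = 0 := by
    intro m' hm'n
    have hbr : ⁅x, m'⁆ = ⁅a, m'⁆ := by
      rw [← hxeq, add_lie, habel m hm' m' hm'n, add_zero]
    have := hx m'
    rw [LinearMap.add_apply, hbr, hφs _ (n.lie_mem hm'n)] at this
    simpa using this
  -- Step 2: a ∈ s, i.e. φn ⁅z, a⁆ = 0 for all z
  have hs : ∀ z : L, φn ⁅z, a⁆ = 0 := by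
    intro z
    have hzmem : z ∈ l.toSubmodule ⊔ LieSubmodule.toSubmodule n := by
      rw [hsup]; exact Submodule.mem_top
    obtain ⟨y, hy, m', hm'n, hzeq⟩ := Submodule.mem_sup.mp hzmem
    rw [← hzeq, add_lie, map_add]
    have hyl : φn ⁅y, a⁆ = 0 := hφn _ (l.lie_mem hy ha')
    have : φn ⁅m', a⁆ = 0 := by
      rw [← lie_skew, map_neg, h1 m' hm'n, neg_zero]
    rw [hyl, this, add_zero]
  -- Step 3: a = 0 via hfrobS
  have ha0 : a = 0 := by
    refine hfrobS a ha' hs ?_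
    intro b hb hbs
    have := hx b
    rw [LinearMap.add_apply, ← hxeq, add_lie, map_add, map_add] at this
    have e1 : φs ⁅m, b⁆ = 0 := by
      refine hφs _ ?_
      have : ⁅b, m⁆ ∈ n := n.lie_mem hm'
      rw [← lie_skew]; exact n.neg_mem this
    have e2 : φn ⁅a, b⁆ = 0 := hφn _ (l.lie_mem ha' hb)
    have e3 : φn ⁅m, b⁆ = 0 := hbs m
    rw [e1, e2, e3] at this
    simpa using this
  have hxm : x = m := by rw [← hxeq, ha0, zero_add]
  -- Step 4: φn ⁅m, y⁆ = 0 for all y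
  have h4 : ∀ y : L, φn ⁅m, y⁆ = 0 := by
    intro y
    have hymem : y ∈ l.toSubmodule ⊔ LieSubmodule.toSubmodule n := by
      rw [hsup]; exact Submodule.mem_top
    obtain ⟨yl, hyl, m', hm'n, hyeq⟩ := Submodule.mem_sup.mp hymem
    rw [← hyeq, lie_add, map_add, habel m hm' m' hm'n, map_zero, add_zero]
    have := hx yl
    rw [hxm, LinearMap.add_apply] at this
    have : φs ⁅m, yl⁆ = 0 := by
      refine hφs _ ?_
      have : ⁅yl, m⁆ ∈ n := n.lie_mem hm'
      rw [← lie_skew]; exact n.neg_mem this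
    have := hx yl
    rw [hxm, LinearMap.add_apply, ‹φs ⁅m, yl⁆ = 0›] at this
    simpa using this
  -- Step 5: m ∈ l, hence m = 0
  have hml : m ∈ l.toSubmodule := by
    by_contra hnot
    obtain ⟨f, hf1, hf2⟩ := Submodule.exists_dual_map_eq_bot_of_notMem hnot inferInstance
    have hf0 : ∀ z ∈ l, f z = 0 := by
      intro z hz
      have : f z ∈ Submodule.map f l.toSubmodule := ⟨z, hz, rfl⟩
      rw [hf2] at this
      simpa using this
    obtain ⟨b, hb, hball⟩ := hreg f hf0
    have := hball m hm'
    rw [h4 b] at this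
    exact hf1 this
  have : m ∈ l.toSubmodule ⊓ LieSubmodule.toSubmodule n := ⟨hml, hm⟩
  rw [hdisj] at this
  rw [hxm]
  simpa using this
end
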